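/- arXiv:1502.02586 — 7 statements merged into one kernel-verified Lean document; each statement's English description precedes it below -/
import Mathlib

section
/- Let G be a compact Hausdorff topological group acting continuously on a Hausdorff space X, and let U be a G-categorical subset of X which contains a fixed point x₀ ∈ X^G. Then U is equivariantly contractible to x₀; that is, there exists a G-homotopy H' : U × [0,1] → X with H'(x,0) = x and H'(x,1) = x₀ for every x ∈ U. -/
open Set unitInterval

/-- The orbit of a point under a `SMul` of `G` on `X`. -/
def smulOrbit (G : Type*) {X : Type*} [SMul G X] (x : X) : Set X :=
  Set.range fun g : G => g • x

/-- A subset `U` of a `G`-space `X` is `G`-invariant if `GU ⊆ U`. -/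
def IsInvariantSet (G : Type*) {X : Type*} [SMul G X] (U : Set X) : Prop :=
  ∀ g : G, ∀ x ∈ U, g • x ∈ U

/-- `H : U × [0,1] → X` is a `G`-homotopy: it is continuous and
`g • H(x,t) = H(g • x, t)` whenever both sides make sense. -/
def IsGHomotopy (G : Type*) {X : Type*} [SMul G X] [TopologicalSpace X]
    (U : Set X) (H : U × I → X) : Prop :=
  Continuous H ∧
    ∀ (g : G) (x : U) (hgx : g • (x : X) ∈ U) (t : I),
      g • H (x, t) = H (⟨g • (x : X), hgx⟩, t)

/-- A `G`-invariant open subset `U` of `X` is `G`-categorical if there is a `G`-homotopy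
`H : U × [0,1] → X` starting at the inclusion and ending inside a single orbit. -/
def IsGCategorical (G : Type*) {X : Type*} [SMul G X] [TopologicalSpace X] (U : Set X) : Prop :=
  IsOpen U ∧ IsInvariantSet G U ∧
    ∃ H : U × I → X, IsGHomotopy G U H ∧ (∀ x : U, H (x, 0) = x) ∧
      ∃ z : X, ∀ x : U, H (x, 1) ∈ smulOrbit G z

/-- The equivariant Lusternik–Schnirelmann category of a `G`-space: the least number of
`G`-categorical open sets covering `X`, as an element of `ℕ∞` (`⊤` if no finite cover exists). -/
noncomputable def eqvCat (G X : Type*) [SMul G X] [TopologicalSpace X] : ℕ∞ :=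
  sInf {c : ℕ∞ | ∃ n : ℕ, c = n ∧ ∃ U : Fin n → Set X,
    (∀ i, IsGCategorical G (U i)) ∧ (⋃ i, U i) = Set.univ}

/-- A subset `U` of `X` is categorical if it is open and contractible to a point within `X`. -/
def IsCategoricalSet {X : Type*} [TopologicalSpace X] (U : Set X) : Prop :=
  IsOpen U ∧ ∃ H : U × I → X, Continuous H ∧ (∀ x : U, H (x, 0) = x) ∧
    ∃ p : X, ∀ x : U, H (x, 1) = p

/-- The (classical) Lusternik–Schnirelmann category of `X`, valued in `ℕ∞`. -/
noncomputable def LScat (X : Type*) [TopologicalSpace X] : ℕ∞ :=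
  sInf {c : ℕ∞ | ∃ n : ℕ, c = n ∧ ∃ U : Fin n → Set X,
    (∀ i, IsCategoricalSet (U i)) ∧ (⋃ i, U i) = Set.univ}

/-- The fixed point set `X^G`. -/
def fixedPts (G X : Type*) [SMul G X] : Set X := {x : X | ∀ g : G, g • x = x}

/-- The (trivial) restriction of the `G`-action to the fixed point set `X^G`. -/
def fixedSMul (G X : Type*) [SMul G X] : SMul G ↥(fixedPts G X) := ⟨fun _ x => x⟩

/-- Let `G` be a compact Hausdorff topological group acting continuously on a
Hausdorff space `X`, and let `U` be a `G`-categorical subset of `X` containing a fixed point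
`x₀ ∈ X^G`. Then `U` is equivariantly contractible to `x₀`: there is a `G`-homotopy
`H' : U × [0,1] → X` with `H'(x,0) = x` and `H'(x,1) = x₀` for every `x ∈ U`. -/
theorem gcategorical_contractible_to_fixed_point
    {G X : Type*} [Group G] [TopologicalSpace G] [IsTopologicalGroup G] [CompactSpace G]
    [T2Space G] [TopologicalSpace X] [T2Space X] [MulAction G X] [ContinuousSMul G X]
    (U : Set X) (hU : IsGCategorical G U) (x₀ : X) (hx₀U : x₀ ∈ U)
    (hfix : x₀ ∈ fixedPts G X) :
    ∃ H' : U × I → X, IsGHomotopy G U H' ∧ (∀ x : U, H' (x, 0) = x) ∧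
      ∀ x : U, H' (x, 1) = x₀ := by
  obtain ⟨-, -, H, hH, h0, z, hz⟩ := hU
  set x₀' : U := ⟨x₀, hx₀U⟩ with hx₀'
  -- H(x₀, t) is a fixed point for every t
  have hfixH : ∀ (g : G) (t : I), g • H (x₀', t) = H (x₀', t) := by
    intro g t
    have hgx : g • (x₀' : X) ∈ U := by
      show g • x₀ ∈ U
      rw [hfix g]; exact hx₀U
    have h := hH.2 g x₀' hgx t
    have hmk : (⟨g • (x₀' : X), hgx⟩ : U) = x₀' := Subtype.ext (hfix g)
    rw [hmk] at h
    exact h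
  -- all endpoints coincide with H(x₀', 1)
  have hend : ∀ x : U, H (x, 1) = H (x₀', 1) := by
    intro x
    obtain ⟨g, hg⟩ := hz x
    obtain ⟨g₀, hg₀⟩ := hz x₀'
    have : H (x, 1) = (g * g₀⁻¹) • H (x₀', 1) := by
      rw [← hg₀, ← hg, mul_smul, inv_smul_smul]
    rw [this, hfixH]
  -- the two reparametrizations
  set sg : I → I := fun t => Set.projIcc 0 1 zero_le_one (2 * (t : ℝ)) with hsg
  set ta : I → I := fun t => Set.projIcc 0 1 zero_le_one (2 - 2 * (t : ℝ)) with hta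
  have hsgc : Continuous sg := continuous_projIcc.comp (by fun_prop)
  have htac : Continuous ta := continuous_projIcc.comp (by fun_prop)
  refine ⟨fun p => if (p.2 : ℝ) ≤ 1 / 2 then H (p.1, sg p.2) else H (x₀', ta p.2), ⟨?_, ?_⟩, ?_, ?_⟩
  · -- continuity
    apply Continuous.if_le
    · exact hH.1.comp (continuous_fst.prodMk (hsgc.comp continuous_snd))
    · exact hH.1.comp (continuous_const.prodMk (htac.comp continuous_snd))
    · fun_prop
    · exact continuous_const
    · intro p hp
      have hsg1 : sg p.2 = 1 := by
        norm_num [hsg, hp, Set.projIcc]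
      have hta1 : ta p.2 = 1 := by
        norm_num [hta, hp, Set.projIcc]
      rw [hsg1, hta1, hend]
  · -- equivariance
    intro g x hgx t
    by_cases ht : (t : ℝ) ≤ 1 / 2
    · simp only [ht, if_true]
      exact hH.2 g x hgx (sg t)
    · simp only [ht, if_false]
      exact hfixH g (ta t)
  · -- starts at inclusion
    intro x
    have h2 : ((0 : I) : ℝ) ≤ 1 / 2 := by norm_num
    simp only [h2, if_true]
    have : sg 0 = 0 := by
      norm_num [hsg, Set.projIcc]
    rw [this, h0]
  · -- ends at x₀
    intro x
    have h2 : ¬ ((1 : I) : ℝ) ≤ 1 / 2 := by norm_num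
    simp only [h2, if_false]
    have : ta 1 = 0 := by
      norm_num [hta, Set.projIcc]
    rw [this, h0]
end

section
/- Let G be a compact Hausdorff topological group acting continuously on a Hausdorff space X, and let U be a G-categorical subset of X. If U' = U ∩ X^G is nonempty, then U' is a G-categorical subset of X^G (with the subspace topology and the restricted, trivial, G-action); in particular the inclusion of U' in X^G is G-contractible to a single fixed point. -/
open Set unitInterval

/-- Let `G` be a compact Hausdorff topological group acting continuously on a
Hausdorff space `X`, and let `U` be a `G`-categorical subset of `X`. If `U' = U ∩ X^G` is
nonempty, then `U'` is a `G`-categorical subset of `X^G` (with the subspace topology and the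
restricted, trivial, `G`-action); in particular the inclusion of `U'` in `X^G` is
`G`-contractible to a single fixed point. -/
theorem isGCategorical_inter_fixedPts
    {G X : Type*} [Group G] [TopologicalSpace G] [IsTopologicalGroup G] [CompactSpace G]
    [T2Space G] [TopologicalSpace X] [T2Space X] [MulAction G X] [ContinuousSMul G X]
    (U : Set X) (hU : IsGCategorical G U) (hne : (U ∩ fixedPts G X).Nonempty) :
    @IsGCategorical G ↥(fixedPts G X) (fixedSMul G X) inferInstance
      {x : ↥(fixedPts G X) | (x : X) ∈ U} := by
  obtain ⟨hopen, hinv, H, ⟨Hcont, Hequiv⟩, H0, z, H1⟩ := hU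
  -- for a fixed point x ∈ U, every H (x, t) is fixed
  have fixH : ∀ (x : U), (x : X) ∈ fixedPts G X → ∀ t : I, H (x, t) ∈ fixedPts G X := by
    intro x hx t g
    have hgx : g • (x : X) ∈ U := by rw [hx g]; exact x.2
    have hxx : (⟨g • (x : X), hgx⟩ : U) = x := Subtype.ext (hx g)
    rw [Hequiv g x hgx t, hxx]
  -- any two fixed points in one orbit coincide
  have orbfix : ∀ a b : X, a ∈ smulOrbit G z → b ∈ smulOrbit G z →
      a ∈ fixedPts G X → b ∈ fixedPts G X → a = b := by
    rintro a b ⟨g, rfl⟩ ⟨h, rfl⟩ ha _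
    have ha' : (h * g⁻¹) • g • z = g • z := ha (h * g⁻¹)
    show g • z = h • z
    rw [← ha', ← mul_smul, mul_assoc, inv_mul_cancel, mul_one]
  obtain ⟨x₀, hx₀U, hx₀F⟩ := hne
  refine ⟨?_, ?_, ?_⟩
  · exact isOpen_induced_iff.2 ⟨U, hopen, rfl⟩
  · intro g x hx
    exact hx
  · refine ⟨fun p => ⟨H (⟨(p.1.1 : X), p.1.2⟩, p.2), fixH _ p.1.1.2 p.2⟩, ⟨?_, ?_⟩, ?_, ?_⟩
    · refine Continuous.subtype_mk (Hcont.comp ?_) _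
      exact (((continuous_subtype_val.comp continuous_fst).subtype_val).subtype_mk _).prodMk
        continuous_snd
    · intro g x hgx t
      rfl
    · intro x
      exact Subtype.ext (H0 _)
    · refine ⟨⟨H (⟨x₀, hx₀U⟩, 1), fixH _ hx₀F 1⟩, fun x => ⟨1, ?_⟩⟩
      refine Subtype.ext ?_
      show H (⟨x₀, hx₀U⟩, 1) = H (⟨(x.1 : X), x.2⟩, 1)
      exact orbfix _ _ (H1 _) (H1 _) (fixH _ hx₀F 1) (fixH _ x.1.2 1)
end

section
/- Let G be a compact Hausdorff topological group acting continuously on a Hausdorff space X, and suppose {U_i}_{i=1}^n is a G-categorical covering of X. Then {U_i ∩ X^G}_{i=1}^n (discarding empty intersections) is a G-categorical covering of X^G, and consequently |π₀(X^G)| ≤ cat(X^G) = cat_G(X^G) ≤ cat_G(X), where |π₀(X^G)| denotes the number of path-components of the fixed point set. -/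
open Set unitInterval

section Aux

open Set unitInterval

variable {G X : Type*}

lemma mem_fixed_of_smul [Group G] [MulAction G X] {z : X} (g : G)
    (h : g • z ∈ fixedPts G X) : z ∈ fixedPts G X := by
  intro k
  have h2 := h (g * k * g⁻¹)
  rw [mul_smul, mul_smul, inv_smul_smul] at h2
  exact smul_left_cancel g h2

lemma smul_eq_of_smul_fixed [Group G] [MulAction G X] {z : X} (g : G)
    (h : g • z ∈ fixedPts G X) : g • z = z :=
  mem_fixed_of_smul g h g

/-- Core restriction lemma: a `G`-categorical set of `X` restricts to a
`G`-categorical set of the fixed point space, provided the latter is nonempty. -/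
lemma restrict_gcat [Group G] [TopologicalSpace X] [MulAction G X]
    {U : Set X} (hU : IsGCategorical G U) (hne : Nonempty ↥(fixedPts G X)) :
    @IsGCategorical G ↥(fixedPts G X) (fixedSMul G X) inferInstance
      {x : ↥(fixedPts G X) | (x : X) ∈ U} := by
  letI : SMul G ↥(fixedPts G X) := fixedSMul G X
  obtain ⟨hopen, hinv, H, ⟨Hcont, Hequi⟩, H0, z, hz⟩ := hU
  set V : Set ↥(fixedPts G X) := {x : ↥(fixedPts G X) | (x : X) ∈ U} with hV
  refine ⟨hopen.preimage continuous_subtype_val, ?_, ?_⟩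
  · intro g x hx; exact hx
  · rcases eq_empty_or_nonempty V with hVe | ⟨x₀, hx₀⟩
    · refine ⟨fun _ => hne.some, ⟨?_, ?_⟩, ?_, hne.some, ?_⟩
      · exact continuous_const
      · intro g x _ _; rfl
      · intro x; exact absurd x.2 (Set.eq_empty_iff_forall_notMem.mp hVe _)
      · intro x; exact absurd x.2 (Set.eq_empty_iff_forall_notMem.mp hVe _)
    · -- the restricted homotopy lands in the fixed point set
      have hfix : ∀ (x : V) (t : I), H (⟨(x : ↥(fixedPts G X)), x.2⟩, t) ∈ fixedPts G X := by
        intro x t g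
        have hxf : (((x : ↥(fixedPts G X)) : X)) ∈ fixedPts G X := (x : ↥(fixedPts G X)).2
        have hgx : g • (((x : ↥(fixedPts G X)) : X)) ∈ U := by
          rw [hxf g]; exact x.2
        rw [Hequi g ⟨_, x.2⟩ hgx t]
        exact congrArg H (Prod.ext (Subtype.ext (hxf g)) rfl)
      refine ⟨fun p => ⟨H (⟨(p.1 : ↥(fixedPts G X)), p.1.2⟩, p.2), hfix p.1 p.2⟩, ⟨?_, ?_⟩,
        ?_, ?_⟩
      · apply Continuous.subtype_mk
        exact Hcont.comp ((((continuous_subtype_val.comp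
          continuous_subtype_val).comp continuous_fst).subtype_mk _).prodMk continuous_snd)
      · intro g x hgx t; rfl
      · intro x; exact Subtype.ext (H0 ⟨_, x.2⟩)
      · -- all endpoints equal the fixed point `z`
        have hzfix : z ∈ fixedPts G X := by
          obtain ⟨g, hg⟩ := hz ⟨_, hx₀⟩
          have hg' : g • z = H (⟨_, hx₀⟩, 1) := hg
          exact mem_fixed_of_smul g (by rw [hg']; exact hfix ⟨x₀, hx₀⟩ 1)
        have hend : ∀ x : V, H (⟨(x : ↥(fixedPts G X)), x.2⟩, 1) = z := by
          intro x
          obtain ⟨g, hg⟩ := hz ⟨_, x.2⟩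
          have hg' : g • z = H (⟨_, x.2⟩, 1) := hg
          rw [← hg', smul_eq_of_smul_fixed g (by rw [hg']; exact hfix x 1)]
        exact ⟨⟨z, hzfix⟩, fun x => ⟨1, Subtype.ext (hend x).symm⟩⟩

/-- Under the trivial action, `G`-categorical is the same as categorical. -/
lemma gcat_trivial_iff {G Y : Type*} [Monoid G] [SMul G Y] [TopologicalSpace Y]
    (htriv : ∀ (g : G) (y : Y), g • y = y) (V : Set Y) :
    IsGCategorical G V ↔ IsCategoricalSet V := by
  constructor
  · rintro ⟨hopen, -, H, ⟨Hcont, -⟩, H0, z, hz⟩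
    refine ⟨hopen, H, Hcont, H0, z, fun x => ?_⟩
    obtain ⟨g, hg⟩ := hz x
    have hg' : g • z = H (x, 1) := hg
    rw [← hg', htriv]
  · rintro ⟨hopen, H, Hcont, H0, p, hp⟩
    refine ⟨hopen, fun g x hx => by rw [htriv]; exact hx,
      H, ⟨Hcont, fun g x hgx t => ?_⟩, H0, p, fun x => ⟨1, by show (1 : G) • p = H (x, 1); rw [htriv]; exact (hp x).symm⟩⟩
    rw [htriv]
    congr 2
    exact Subtype.ext (htriv g _).symm

lemma LScat_eq_eqvCat_trivial {G Y : Type*} [Monoid G] [SMul G Y] [TopologicalSpace Y]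
    (htriv : ∀ (g : G) (y : Y), g • y = y) :
    LScat Y = eqvCat G Y := by
  unfold LScat eqvCat
  congr 1
  ext c
  constructor <;> rintro ⟨n, rfl, W, hW, hcov⟩
  · exact ⟨n, rfl, W, fun i => (gcat_trivial_iff htriv (W i)).mpr (hW i), hcov⟩
  · exact ⟨n, rfl, W, fun i => (gcat_trivial_iff htriv (W i)).mp (hW i), hcov⟩

/-- A categorical cover by `n` sets bounds the number of path components. -/
lemma card_zerothHomotopy_le {Y : Type*} [TopologicalSpace Y] (n : ℕ)
    (W : Fin n → Set Y) (hW : ∀ i, IsCategoricalSet (W i))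
    (hcov : (⋃ i, W i) = Set.univ) :
    ENat.card (ZerothHomotopy Y) ≤ (n : ℕ∞) := by
  rcases isEmpty_or_nonempty Y with hY | hY
  · have : IsEmpty (ZerothHomotopy Y) := by
      unfold ZerothHomotopy
      infer_instance
    simp [ENat.card_eq_zero_iff_empty _ |>.mpr this]
  · classical
    have : Nonempty (ZerothHomotopy Y) := Nonempty.map (Quotient.mk _) hY
    -- for each point of `W i`, it is joined to some chosen basepoint
    have key : ∀ (i : Fin n) (y : Y), y ∈ W i → ∃ p : Y, Joined y p ∧
        ∀ y' ∈ W i, Joined y' p := by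
      intro i y hy
      obtain ⟨-, H, Hcont, H0, p, hp⟩ := hW i
      have path : ∀ y' : W i, Joined (y' : Y) p := by
        intro y'
        exact ⟨{ toFun := fun t => H (y', t)
                 continuous_toFun := Hcont.comp (continuous_const.prodMk continuous_id)
                 source' := H0 y'
                 target' := hp y' }⟩
      exact ⟨p, path ⟨y, hy⟩, fun y' hy' => path ⟨y', hy'⟩⟩
    set f : ULift.{_} (Fin n) → ZerothHomotopy Y := fun i =>
      if h : (W i.down).Nonempty then ⟦h.choose⟧ else ⟦hY.some⟧ with hf
    have hsurj : Function.Surjective f := by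
      intro q
      obtain ⟨y, rfl⟩ := Quotient.exists_rep q
      have hy : y ∈ ⋃ i, W i := hcov ▸ Set.mem_univ y
      obtain ⟨i, hyi⟩ := Set.mem_iUnion.mp hy
      refine ⟨ULift.up i, ?_⟩
      have hne : (W i).Nonempty := ⟨y, hyi⟩
      simp only [hf, ULift.down_up, dif_pos hne]
      obtain ⟨p, hyp, hall⟩ := key i y hyi
      exact (dif_pos hne).trans (Quotient.sound (s := pathSetoid Y) ((hall _ hne.choose_spec).trans hyp.symm))
    calc ENat.card (ZerothHomotopy Y)
        ≤ ENat.card (ULift (Fin n)) := by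
          rw [ENat.card, ENat.card, Cardinal.toENat_le_iff_of_lt_aleph0 (by
            simpa using Cardinal.nat_lt_aleph0 n)]
          exact Cardinal.mk_le_of_surjective hsurj
      _ = (n : ℕ∞) := by simp

end Aux

/-- Let `G` be a compact Hausdorff topological group acting continuously on a
Hausdorff space `X`, and suppose `{U_i}_{i=1}^n` is a `G`-categorical covering of `X`. Then
`{U_i ∩ X^G}` (discarding empty intersections) is a `G`-categorical covering of `X^G`, and
consequently `|π₀(X^G)| ≤ cat(X^G) = cat_G(X^G) ≤ cat_G(X)`. -/
theorem gcategorical_cover_fixedPts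
    {G X : Type*} [Group G] [TopologicalSpace G] [IsTopologicalGroup G] [CompactSpace G]
    [T2Space G] [TopologicalSpace X] [T2Space X] [MulAction G X] [ContinuousSMul G X]
    (n : ℕ) (U : Fin n → Set X) (hcat : ∀ i, IsGCategorical G (U i))
    (hcov : (⋃ i, U i) = Set.univ) :
    (∀ i, {x : ↥(fixedPts G X) | (x : X) ∈ U i}.Nonempty →
        @IsGCategorical G ↥(fixedPts G X) (fixedSMul G X) inferInstance
          {x : ↥(fixedPts G X) | (x : X) ∈ U i}) ∧
    (⋃ i, {x : ↥(fixedPts G X) | (x : X) ∈ U i}) = Set.univ ∧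
    ENat.card (ZerothHomotopy ↥(fixedPts G X)) ≤ LScat ↥(fixedPts G X) ∧
    LScat ↥(fixedPts G X) = @eqvCat G ↥(fixedPts G X) (fixedSMul G X) inferInstance ∧
    @eqvCat G ↥(fixedPts G X) (fixedSMul G X) inferInstance ≤ eqvCat G X := by
    classical
  letI : SMul G ↥(fixedPts G X) := fixedSMul G X
  have htriv : ∀ (g : G) (y : ↥(fixedPts G X)), g • y = y := fun _ _ => rfl
  refine ⟨?_, ?_, ?_, ?_, ?_⟩
  · rintro i ⟨x, hx⟩
    exact restrict_gcat (hcat i) ⟨x⟩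
  · apply Set.eq_univ_of_forall
    intro x
    have hx : (x : X) ∈ ⋃ i, U i := hcov ▸ Set.mem_univ _
    obtain ⟨i, hi⟩ := Set.mem_iUnion.mp hx
    exact Set.mem_iUnion.mpr ⟨i, hi⟩
  · refine le_sInf ?_
    rintro b ⟨m, rfl, W, hW, hWcov⟩
    exact card_zerothHomotopy_le m W hW hWcov
  · exact LScat_eq_eqvCat_trivial htriv
  · rcases isEmpty_or_nonempty ↥(fixedPts G X) with hF | hF
    · have h0 : @eqvCat G ↥(fixedPts G X) (fixedSMul G X) inferInstance = 0 := by
        refine le_antisymm (sInf_le ⟨0, rfl, Fin.elim0, fun i => i.elim0, ?_⟩) zero_le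
        apply Set.eq_univ_of_forall
        intro x
        exact (hF.false x).elim
      rw [h0]
      exact zero_le
    · refine le_sInf ?_
      rintro b ⟨m, rfl, W, hW, hWcov⟩
      refine sInf_le ⟨m, rfl, fun i => {x : ↥(fixedPts G X) | (x : X) ∈ W i},
        fun i => restrict_gcat (hW i) hF, ?_⟩
      apply Set.eq_univ_of_forall
      intro x
      have hx : (x : X) ∈ ⋃ i, W i := hWcov ▸ Set.mem_univ _
      obtain ⟨i, hi⟩ := Set.mem_iUnion.mp hx
      exact Set.mem_iUnion.mpr ⟨i, hi⟩
end

section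
/- Let G be a compact Hausdorff topological group acting continuously on a Hausdorff space X with finite fixed point set, |X^G| < ∞. Then every G-categorical subset of X contains at most one fixed point, all fixed points are isolated, and |X^G| = cat_G(X^G) = cat(X^G). -/
open Set unitInterval

/-- A finite preconnected set in a T1 space is a subsingleton. -/
lemma finite_preconnected_subsingleton {Y : Type*} [TopologicalSpace Y] [T1Space Y]
    {S : Set Y} (hfin : S.Finite) (hconn : IsPreconnected S) : S.Subsingleton := by
  intro a ha b hb
  by_contra hab
  have h1 : IsOpen (S \ {a})ᶜ := (hfin.subset diff_subset).isClosed.isOpen_compl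
  have h2 : IsOpen ({a} : Set Y)ᶜ := isClosed_singleton.isOpen_compl
  obtain ⟨c, hcS, hcu, hcv⟩ := hconn _ _ h1 h2
    (fun x hx => by
      by_cases h : x = a
      · exact Or.inl (by simp [h])
      · exact Or.inr h)
    ⟨a, ha, by simp⟩ ⟨b, hb, Ne.symm hab⟩
  exact hcv (by simpa [Set.mem_diff, hcS] using hcu)

/-- A continuous path with finite range in a T1 space has equal endpoints. -/
lemma path_endpoints_eq {Y : Type*} [TopologicalSpace Y] [T1Space Y] {f : I → Y}
    (hf : Continuous f) (hfin : (Set.range f).Finite) : f 1 = f 0 :=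
  finite_preconnected_subsingleton hfin (isPreconnected_range hf)
    (Set.mem_range_self 1) (Set.mem_range_self 0)

/-- A covering of a type by `n` subsingleton sets forces `Nat.card ≤ n`. -/
lemma card_le_of_subsingleton_cover {Y : Type*} {n : ℕ} {U : Fin n → Set Y}
    (hsub : ∀ i, (U i).Subsingleton) (hcov : (⋃ i, U i) = Set.univ) :
    Nat.card Y ≤ n := by
  have hex : ∀ y : Y, ∃ i, y ∈ U i := fun y =>
    Set.mem_iUnion.mp (hcov ▸ Set.mem_univ y)
  choose idx hidx using hex
  have hinj : Function.Injective idx := fun a b hab =>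
    hsub (idx a) (hidx a) (hab ▸ hidx b)
  calc Nat.card Y ≤ Nat.card (Fin n) := Nat.card_le_card_of_injective idx hinj
    _ = n := by simp

/-- Under a trivial action on a finite T1 space, every `G`-categorical set is a subsingleton. -/
lemma gcat_subsingleton_of_trivial {G Y : Type*} [Nonempty G] [SMul G Y] [TopologicalSpace Y]
    [Finite Y] [T1Space Y] (htriv : ∀ (g : G) (y : Y), g • y = y)
    {U : Set Y} (hU : IsGCategorical G U) : U.Subsingleton := by
  obtain ⟨-, -, H, ⟨hHc, -⟩, hH0, z, hH1⟩ := hU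
  have key : ∀ x : U, (x : Y) = z := by
    intro x
    have hc : Continuous fun t : I => H (x, t) :=
      hHc.comp (continuous_const.prodMk continuous_id)
    have h10 : H (x, 1) = H (x, 0) := path_endpoints_eq hc (Set.toFinite _)
    obtain ⟨g, hg⟩ := hH1 x
    have hg' : g • z = H (x, 1) := hg
    rw [← hH0 x, ← h10, ← hg', htriv]
  intro a ha b hb
  have := (key ⟨a, ha⟩).trans (key ⟨b, hb⟩).symm
  exact this

/-- The equivariant category of a finite T1 space with trivial action equals its cardinality. -/
lemma eqvCat_trivial (G Y : Type*) [Nonempty G] [SMul G Y] [TopologicalSpace Y]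
    [Finite Y] [T1Space Y] (htriv : ∀ (g : G) (y : Y), g • y = y) :
    eqvCat G Y = Nat.card Y := by
  apply le_antisymm
  · apply sInf_le
    refine ⟨Nat.card Y, rfl, fun i => {(Finite.equivFin Y).symm i}, fun i => ?_, ?_⟩
    · set p := (Finite.equivFin Y).symm i with hp
      refine ⟨isOpen_discrete _, fun g x hx => by rw [htriv]; exact hx,
        fun _ => p, ⟨continuous_const, fun g x hgx t => by rw [htriv]⟩,
        fun x => (x.2 : (x : Y) ∈ ({p} : Set Y)).symm, p,
        fun x => ⟨Classical.arbitrary G, htriv _ _⟩⟩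
    · ext y
      simp only [Set.mem_iUnion, Set.mem_singleton_iff, Set.mem_univ, iff_true]
      exact ⟨Finite.equivFin Y y, (Equiv.symm_apply_apply _ _).symm⟩
  · refine le_sInf fun c hc => ?_
    obtain ⟨n, rfl, U, hcat, hcov⟩ := hc
    exact_mod_cast card_le_of_subsingleton_cover
      (fun i => gcat_subsingleton_of_trivial htriv (hcat i)) hcov

/-- The LS category of a finite T1 space equals its cardinality. -/
lemma LScat_finite (Y : Type*) [TopologicalSpace Y] [Finite Y] [T1Space Y] :
    LScat Y = Nat.card Y := by
  apply le_antisymm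
  · apply sInf_le
    refine ⟨Nat.card Y, rfl, fun i => {(Finite.equivFin Y).symm i}, fun i => ?_, ?_⟩
    · set p := (Finite.equivFin Y).symm i with hp
      exact ⟨isOpen_discrete _, fun _ => p, continuous_const,
        fun x => (x.2 : (x : Y) ∈ ({p} : Set Y)).symm, p, fun x => rfl⟩
    · ext y
      simp only [Set.mem_iUnion, Set.mem_singleton_iff, Set.mem_univ, iff_true]
      exact ⟨Finite.equivFin Y y, (Equiv.symm_apply_apply _ _).symm⟩
  · refine le_sInf fun c hc => ?_
    obtain ⟨n, rfl, U, hcat, hcov⟩ := hc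
    refine Nat.cast_le.mpr (card_le_of_subsingleton_cover (fun i => ?_) hcov)
    obtain ⟨-, H, hHc, hH0, p, hH1⟩ := hcat i
    intro a ha b hb
    have key : ∀ x : U i, (x : Y) = p := by
      intro x
      have hc' : Continuous fun t : I => H (x, t) :=
        hHc.comp (continuous_const.prodMk continuous_id)
      have h10 : H (x, 1) = H (x, 0) := path_endpoints_eq hc' (Set.toFinite _)
      rw [← hH0 x, ← h10, hH1]
    exact (key ⟨a, ha⟩).trans (key ⟨b, hb⟩).symm

/-- Let `G` be a compact Hausdorff topological group acting continuously on a
Hausdorff space `X` with finite fixed point set `|X^G| < ∞`. Then every `G`-categorical subset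
of `X` contains at most one fixed point, all fixed points are isolated, and
`|X^G| = cat_G(X^G) = cat(X^G)`. -/
theorem finite_fixedPts_eqvCat
    {G X : Type*} [Group G] [TopologicalSpace G] [IsTopologicalGroup G] [CompactSpace G]
    [T2Space G] [TopologicalSpace X] [T2Space X] [MulAction G X] [ContinuousSMul G X]
    (hfin : (fixedPts G X).Finite) :
    (∀ U : Set X, IsGCategorical G U → (U ∩ fixedPts G X).Subsingleton) ∧
    (∀ x₀ ∈ fixedPts G X, ∃ V : Set X, IsOpen V ∧ x₀ ∈ V ∧ V ∩ fixedPts G X = {x₀}) ∧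
    ((fixedPts G X).ncard : ℕ∞) = @eqvCat G ↥(fixedPts G X) (fixedSMul G X) inferInstance ∧
    @eqvCat G ↥(fixedPts G X) (fixedSMul G X) inferInstance = LScat ↥(fixedPts G X) := by
    classical
  have hpart1 : ∀ U : Set X, IsGCategorical G U → (U ∩ fixedPts G X).Subsingleton := by
    intro U hU
    obtain ⟨-, -, H, ⟨hHc, hHeq⟩, hH0, z, hH1⟩ := hU
    have key : ∀ x (hxU : x ∈ U), x ∈ fixedPts G X → x ∈ smulOrbit G z := by
      intro x hxU hx
      set f : I → X := fun t => H (⟨x, hxU⟩, t) with hf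
      have hfc : Continuous f := hHc.comp (continuous_const.prodMk continuous_id)
      have hrange : Set.range f ⊆ fixedPts G X := by
        rintro - ⟨t, rfl⟩
        intro g
        have hgx : g • x ∈ U := by rw [hx g]; exact hxU
        have := hHeq g ⟨x, hxU⟩ hgx t
        rwa [show (⟨g • x, hgx⟩ : U) = ⟨x, hxU⟩ from Subtype.ext (hx g)] at this
      have h10 : f 1 = f 0 := path_endpoints_eq hfc (hfin.subset hrange)
      have : f 0 = x := hH0 ⟨x, hxU⟩
      have hx1 : x = f 1 := by rw [h10, this]
      rw [hx1]
      exact hH1 ⟨x, hxU⟩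
    rintro a ⟨haU, ha⟩ b ⟨hbU, hb⟩
    obtain ⟨g, hg⟩ := key a haU ha
    obtain ⟨h, hh⟩ := key b hbU hb
    have hg' : g • z = a := hg
    have hh' : h • z = b := hh
    have : b = (h * g⁻¹) • a := by rw [mul_smul, ← hg', inv_smul_smul, hh']
    rw [this, ha (h * g⁻¹)]
  refine ⟨hpart1, ?_, ?_, ?_⟩
  · intro x₀ hx₀
    refine ⟨(fixedPts G X \ {x₀})ᶜ,
      (hfin.subset diff_subset).isClosed.isOpen_compl, by simp, ?_⟩
    ext y
    simp only [Set.mem_inter_iff, Set.mem_compl_iff, Set.mem_diff,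
      Set.mem_singleton_iff, not_and, not_not]
    constructor
    · rintro ⟨h1, h2⟩; exact h1 h2
    · rintro rfl; exact ⟨fun _ => rfl, hx₀⟩
  · haveI : Finite ↥(fixedPts G X) := hfin.to_subtype
    rw [@eqvCat_trivial G ↥(fixedPts G X) _ (fixedSMul G X) _ _ _ (fun g y => rfl),
      Nat.card_coe_set_eq]
  · haveI : Finite ↥(fixedPts G X) := hfin.to_subtype
    rw [@eqvCat_trivial G ↥(fixedPts G X) _ (fixedSMul G X) _ _ _ (fun g y => rfl),
      LScat_finite]
end

section
/- Let G be a topological group acting on a topological space X. Then X admits a minimal G-categorical sequence of length n if and only if cat_G(X) = n. -/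
open Set unitInterval

/-- A `G`-categorical sequence of length `n`: a sequence of open `G`-invariant sets
`∅ = A₀ ⊊ A₁ ⊊ ⋯ ⊊ Aₙ = X` such that each difference `A_{i+1} − A_i` is contained in a
`G`-categorical subset of `X`. -/
def IsGCatSequence (G : Type*) {X : Type*} [SMul G X] [TopologicalSpace X]
    (A : ℕ → Set X) (n : ℕ) : Prop :=
  A 0 = ∅ ∧ A n = Set.univ ∧
  (∀ i < n, A i ⊂ A (i + 1)) ∧
  (∀ i ≤ n, IsOpen (A i)) ∧
  (∀ i ≤ n, IsInvariantSet G (A i)) ∧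
  ∀ i < n, ∃ U : Set X, IsGCategorical G U ∧ A (i + 1) \ A i ⊆ U


set_option linter.unusedSectionVars false

section Aux

variable {G X : Type*} [Group G] [TopologicalSpace G] [IsTopologicalGroup G]
    [TopologicalSpace X] [MulAction G X] [ContinuousSMul G X]

/-- From a `G`-cat sequence of length `n`, extract a categorical cover of size `n`. -/
lemma cover_of_seq {A : ℕ → Set X} {n : ℕ} (h : IsGCatSequence G A n) :
    ∃ U : Fin n → Set X, (∀ i, IsGCategorical G (U i)) ∧ (⋃ i, U i) = Set.univ := by
  obtain ⟨h0, hn, hss, _, _, hU⟩ := h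
  choose U hUcat hUsub using fun i (hi : i < n) => hU i hi
  refine ⟨fun i => U i i.2, fun i => hUcat i i.2, ?_⟩
  have key : ∀ i ≤ n, A i ⊆ ⋃ j : Fin n, U j j.2 := by
    intro i hi
    induction i with
    | zero => simp [h0]
    | succ k ih =>
      have hk : k < n := hi
      intro x hx
      by_cases hxk : x ∈ A k
      · exact ih (le_of_lt hk) hxk
      · exact Set.mem_iUnion.2 ⟨⟨k, hk⟩, hUsub k hk ⟨hx, hxk⟩⟩
  refine Set.eq_univ_of_univ_subset ?_
  rw [← hn]; exact key n le_rfl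

/-- From a minimal-size categorical cover, build a `G`-cat sequence of the same length. -/
lemma seq_of_minimal_cover {k : ℕ} {U : Fin k → Set X}
    (hcat : ∀ i, IsGCategorical G (U i)) (hcov : (⋃ i, U i) = Set.univ)
    (hmin : ∀ (j : ℕ) (V : Fin j → Set X),
      (∀ i, IsGCategorical G (V i)) → (⋃ i, V i) = Set.univ → k ≤ j) :
    ∃ A : ℕ → Set X, IsGCatSequence G A k := by
  refine ⟨fun i => ⋃ j : Fin k, ⋃ (_ : (j : ℕ) < i), U j, ?_, ?_, ?_, ?_, ?_, ?_⟩
  · simp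
  · rw [← hcov]
    exact Set.iUnion_congr fun j => by simp [j.2]
  · intro i hi
    have hsub : (⋃ j : Fin k, ⋃ (_ : (j : ℕ) < i), U j) ⊆
        ⋃ j : Fin k, ⋃ (_ : (j : ℕ) < i + 1), U j := by
      refine Set.iUnion_mono fun j => Set.iUnion_mono' fun hj => ⟨Nat.lt_succ_of_lt hj, le_rfl⟩
    refine ⟨hsub, fun hrev => ?_⟩
    -- If A i = A (i+1), then U ⟨i⟩ is redundant and we get a smaller cover.
    obtain ⟨m, rfl⟩ : ∃ m, k = m + 1 := ⟨k - 1, by omega⟩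
    set p : Fin (m + 1) := ⟨i, hi⟩
    have hUi : U p ⊆ ⋃ j : Fin (m + 1), ⋃ (_ : (j : ℕ) < i), U j := by
      intro x hx
      exact hrev (Set.mem_iUnion.2 ⟨p, Set.mem_iUnion.2 ⟨Nat.lt_succ_self i, hx⟩⟩)
    have : (m : ℕ) + 1 ≤ m :=
      hmin m (fun j => U (p.succAbove j)) (fun j => hcat _) ?_
    · omega
    refine Set.eq_univ_of_univ_subset fun x _ => ?_
    have hx : x ∈ ⋃ i, U i := hcov ▸ Set.mem_univ x
    obtain ⟨j0, hj0⟩ := Set.mem_iUnion.1 hx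
    by_cases hji : j0 = p
    · subst hji
      obtain ⟨j1, hj1m⟩ := Set.mem_iUnion.1 (hUi hj0)
      obtain ⟨hj1lt, hj1⟩ := Set.mem_iUnion.1 hj1m
      have hne : j1 ≠ p := by
        intro h; rw [h] at hj1lt; exact absurd hj1lt (lt_irrefl _)
      obtain ⟨j2, hj2⟩ := Fin.exists_succAbove_eq hne
      exact Set.mem_iUnion.2 ⟨j2, by rw [hj2]; exact hj1⟩
    · obtain ⟨j2, hj2⟩ := Fin.exists_succAbove_eq hji
      exact Set.mem_iUnion.2 ⟨j2, by rw [hj2]; exact hj0⟩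
  · intro i _
    exact isOpen_iUnion fun j => isOpen_iUnion fun _ => (hcat j).1
  · intro i _ g x hx
    obtain ⟨j, hjm⟩ := Set.mem_iUnion.1 hx
    obtain ⟨hjlt, hj⟩ := Set.mem_iUnion.1 hjm
    exact Set.mem_iUnion.2 ⟨j, Set.mem_iUnion.2 ⟨hjlt, (hcat j).2.1 g x hj⟩⟩
  · intro i hi
    refine ⟨U ⟨i, hi⟩, hcat _, fun x hx => ?_⟩
    obtain ⟨hx1, hx2⟩ := hx
    obtain ⟨j, hjm⟩ := Set.mem_iUnion.1 hx1
    obtain ⟨hjlt, hj⟩ := Set.mem_iUnion.1 hjm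
    have : (j : ℕ) = i := by
      rcases Nat.lt_succ_iff_lt_or_eq.1 hjlt with h | h
      · exact absurd (Set.mem_iUnion.2 ⟨j, Set.mem_iUnion.2 ⟨h, hj⟩⟩) hx2
      · exact h
    have : j = (⟨i, hi⟩ : Fin _) := Fin.ext this
    rwa [this] at hj

end Aux

/-- Let `G` be a topological group acting on a topological space `X`. Then `X`
admits a minimal `G`-categorical sequence of length `n` if and only if `cat_G(X) = n`. -/
theorem minimal_gcatSequence_iff_eqvCat
    {G X : Type*} [Group G] [TopologicalSpace G] [IsTopologicalGroup G]
    [TopologicalSpace X] [MulAction G X] [ContinuousSMul G X] (n : ℕ) :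
    (∃ A : ℕ → Set X, IsGCatSequence G A n ∧
        ∀ (m : ℕ) (B : ℕ → Set X), IsGCatSequence G B m → n ≤ m)
      ↔ eqvCat G X = n := by
  classical
  set S : Set ℕ∞ := {c : ℕ∞ | ∃ n : ℕ, c = n ∧ ∃ U : Fin n → Set X,
    (∀ i, IsGCategorical G (U i)) ∧ (⋃ i, U i) = Set.univ} with hS
  have heq : eqvCat G X = sInf S := rfl
  constructor
  · rintro ⟨A, hA, hmin⟩
    obtain ⟨U, hUcat, hUcov⟩ := cover_of_seq hA
    have hnS : (n : ℕ∞) ∈ S := ⟨n, rfl, U, hUcat, hUcov⟩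
    have hle : sInf S ≤ (n : ℕ∞) := sInf_le hnS
    have hmem : sInf S ∈ S := csInf_mem ⟨_, hnS⟩
    obtain ⟨k, hk, V, hVcat, hVcov⟩ := hmem
    -- k is minimal
    have hkmin : ∀ (j : ℕ) (W : Fin j → Set X),
        (∀ i, IsGCategorical G (W i)) → (⋃ i, W i) = Set.univ → k ≤ j := by
      intro j W hWcat hWcov
      have : sInf S ≤ (j : ℕ∞) := sInf_le ⟨j, rfl, W, hWcat, hWcov⟩
      rw [hk] at this
      exact_mod_cast this
    obtain ⟨B, hB⟩ := seq_of_minimal_cover hVcat hVcov hkmin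
    have hnk : n ≤ k := hmin k B hB
    have hkn : k ≤ n := by
      rw [hk] at hle; exact_mod_cast hle
    rw [heq, hk]
    exact_mod_cast congrArg (Nat.cast : ℕ → ℕ∞) (le_antisymm hkn hnk)
  · intro h
    rw [heq] at h
    have hne : S.Nonempty := by
      by_contra hemp
      rw [Set.not_nonempty_iff_eq_empty] at hemp
      rw [hemp, sInf_empty] at h
      exact (ENat.top_ne_coe n) h
    have hmem : sInf S ∈ S := csInf_mem hne
    rw [h] at hmem
    obtain ⟨m, hm, U, hUcat, hUcov⟩ := hmem
    have hmn : m = n := by exact_mod_cast hm.symm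
    subst hmn
    have hmmin : ∀ (j : ℕ) (W : Fin j → Set X),
        (∀ i, IsGCategorical G (W i)) → (⋃ i, W i) = Set.univ → m ≤ j := by
      intro j W hWcat hWcov
      have : sInf S ≤ (j : ℕ∞) := sInf_le ⟨j, rfl, W, hWcat, hWcov⟩
      rw [h] at this
      exact_mod_cast this
    obtain ⟨A, hA⟩ := seq_of_minimal_cover hUcat hUcov hmmin
    refine ⟨A, hA, fun m' B hB => ?_⟩
    obtain ⟨W, hWcat, hWcov⟩ := cover_of_seq hB
    exact hmmin m' W hWcat hWcov
end

section
/- Let G be a compact Hausdorff topological group acting continuously on a Hausdorff space X. Suppose X is G-connected and α ∈ X^G is a fixed point. Then every G-categorical subset U of X is equivariantly contractible to α: there exists a G-homotopy H : U × [0,1] → X with H(x,0) = x and H(x,1) = α for all x ∈ U. -/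
open Set unitInterval

/-- The set of points of `X` fixed by every element of a subgroup `H ≤ G`. -/
def fixedBySubgroup (G : Type*) {X : Type*} [Group G] [MulAction G X] (H : Subgroup G) :
    Set X :=
  {x : X | ∀ h ∈ H, h • x = x}

/-- A `G`-space `X` is `G`-connected if for every closed subgroup `H` of `G` the fixed point
set `X^H` is path-connected (any two of its points are joined by a path inside it). -/
def GConnected (G X : Type*) [Group G] [TopologicalSpace G] [TopologicalSpace X]
    [MulAction G X] : Prop :=
  ∀ H : Subgroup G, IsClosed (H : Set G) →
    ∀ x ∈ fixedBySubgroup G (X := X) H, ∀ y ∈ fixedBySubgroup G (X := X) H,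
      JoinedIn (fixedBySubgroup G (X := X) H) x y

/-- Let `G` be a compact Hausdorff topological group acting continuously on a
Hausdorff space `X`. Suppose `X` is `G`-connected and `α ∈ X^G` is a fixed point. Then every
`G`-categorical subset `U` of `X` is equivariantly contractible to `α`: there is a
`G`-homotopy `H : U × [0,1] → X` with `H(x,0) = x` and `H(x,1) = α` for all `x ∈ U`. -/
theorem gconnected_gcategorical_contractible
    {G X : Type*} [Group G] [TopologicalSpace G] [IsTopologicalGroup G] [CompactSpace G]
    [T2Space G] [TopologicalSpace X] [T2Space X] [MulAction G X] [ContinuousSMul G X]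
    (hGc : GConnected G X) (α : X) (hα : α ∈ fixedPts G X)
    (U : Set X) (hU : IsGCategorical G U) :
    ∃ H : U × I → X, IsGHomotopy G U H ∧ (∀ x : U, H (x, 0) = x) ∧
      ∀ x : U, H (x, 1) = α := by
  obtain ⟨hUopen, hUinv, K, ⟨hKc, hKeq⟩, hK0, z, hK1⟩ := hU
  set S := MulAction.stabilizer G z with hS
  have hSclosed : IsClosed (S : Set G) := by
    have h1 : (S : Set G) = (fun g : G => g • z) ⁻¹' {z} := by
      ext g; simp [hS, MulAction.mem_stabilizer_iff]
    rw [h1]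
    exact isClosed_singleton.preimage (continuous_id.smul continuous_const)
  have hzS : z ∈ fixedBySubgroup G (X := X) S := fun h hh => hh
  have hαS : α ∈ fixedBySubgroup G (X := X) S := fun h _ => hα h
  obtain ⟨γ, hγmem⟩ := hGc S hSclosed z hzS α hαS
  have key : ∀ (g g' : G) (t : I), g • z = g' • z → g • (γ t) = g' • (γ t) := by
    intro g g' t h
    have hst : g⁻¹ * g' ∈ S := by
      rw [hS, MulAction.mem_stabilizer_iff, mul_smul, ← h, inv_smul_smul]
    have h2 : (g⁻¹ * g') • (γ t) = γ t := hγmem t _ hst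
    calc g • γ t = g • ((g⁻¹ * g') • γ t) := by rw [h2]
      _ = g' • γ t := by rw [← mul_smul, mul_inv_cancel_left]
  have orbmem : ∀ g : G, g • z ∈ smulOrbit G z := fun g => ⟨g, rfl⟩
  have orbinv : ∀ (g : G), ∀ y ∈ smulOrbit G z, g • y ∈ smulOrbit G z := by
    rintro g y ⟨g', rfl⟩
    exact ⟨g * g', by simp [mul_smul]⟩
  classical
  set f : ↥(smulOrbit G z) × I → X := fun p => p.1.2.choose • γ p.2 with hf
  have fspec : ∀ (g : G) (hg : g • z ∈ smulOrbit G z) (t : I),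
      f (⟨g • z, hg⟩, t) = g • γ t := by
    intro g hg t
    exact key _ g t hg.choose_spec
  set Q : G × I → ↥(smulOrbit G z) × I :=
    fun p => (⟨p.1 • z, orbmem p.1⟩, p.2) with hQdef
  have hQc : Continuous Q :=
    ((continuous_fst.smul continuous_const).subtype_mk _).prodMk continuous_snd
  have hQsurj : Function.Surjective Q := by
    rintro ⟨⟨y, g, rfl⟩, t⟩
    exact ⟨(g, t), rfl⟩
  have hQ : Topology.IsQuotientMap Q := (hQc.isClosedMap).isQuotientMap hQc hQsurj
  have hfc : Continuous f := by
    rw [hQ.continuous_iff]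
    have h5 : f ∘ Q = fun p : G × I => p.1 • γ p.2 := by
      funext p
      exact fspec p.1 (orbmem p.1) p.2
    rw [h5]
    exact continuous_fst.smul (γ.continuous.comp continuous_snd)
  have f0 : ∀ y : ↥(smulOrbit G z), f (y, 0) = y := by
    intro y
    show y.2.choose • γ 0 = (y : X)
    rw [γ.source]
    exact y.2.choose_spec
  have f1 : ∀ y : ↥(smulOrbit G z), f (y, 1) = α := by
    intro y
    show y.2.choose • γ 1 = α
    rw [γ.target]
    exact hα _
  have feq : ∀ (g : G) (y : ↥(smulOrbit G z)) (hgy : g • (y : X) ∈ smulOrbit G z) (t : I),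
      g • f (y, t) = f (⟨g • (y : X), hgy⟩, t) := by
    intro g y hgy t
    have hc : y.2.choose • z = (y : X) := y.2.choose_spec
    have hd : hgy.choose • z = g • (y : X) := hgy.choose_spec
    show g • (y.2.choose • γ t) = hgy.choose • γ t
    rw [← mul_smul]
    refine (key hgy.choose _ t ?_).symm
    rw [hd, mul_smul, hc]
  set incl : C(U, X) := ⟨fun x => x, continuous_subtype_val⟩ with hincl
  set e : C(U, X) :=
    ⟨fun x => K (x, 1), hKc.comp (Continuous.prodMk continuous_id continuous_const)⟩ with he
  set K' : ContinuousMap.Homotopy incl e :=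
    { toFun := fun p => K (p.2, p.1)
      continuous_toFun := hKc.comp (continuous_snd.prodMk continuous_fst)
      map_zero_left := hK0
      map_one_left := fun x => rfl } with hK'
  set F' : ContinuousMap.Homotopy e (ContinuousMap.const _ α) :=
    { toFun := fun p => f (⟨K (p.2, 1), hK1 p.2⟩, p.1)
      continuous_toFun := hfc.comp
        ((((hKc.comp ((continuous_snd).prodMk continuous_const)).subtype_mk _)).prodMk
          continuous_fst)
      map_zero_left := fun x => f0 _
      map_one_left := fun x => f1 _ } with hF'
  set H' := K'.trans F' with hH'
  refine ⟨fun p => H' (p.2, p.1),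
    ⟨H'.continuous.comp (continuous_snd.prodMk continuous_fst), ?_⟩,
    fun x => H'.apply_zero x, fun x => H'.apply_one x⟩
  intro g x hgx t
  show g • H' (t, x) = H' (t, ⟨g • (x : X), hgx⟩)
  rw [hH', ContinuousMap.Homotopy.trans_apply, ContinuousMap.Homotopy.trans_apply]
  by_cases h : (t : ℝ) ≤ 1 / 2
  · simp only [h, dif_pos]
    exact hKeq g x hgx _
  · simp only [h, dif_neg, not_false_iff]
    have h6 := feq g ⟨K (x, 1), hK1 x⟩ (orbinv g _ (hK1 x))
      ⟨2 * (t : ℝ) - 1, unitInterval.two_mul_sub_one_mem_iff.2 ⟨(not_le.1 h).le, t.2.2⟩⟩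
    refine h6.trans ?_
    have h7 : (⟨g • (K (x, 1) : X), orbinv g _ (hK1 x)⟩ : ↥(smulOrbit G z)) =
        ⟨K (⟨g • (x : X), hgx⟩, 1), hK1 _⟩ := Subtype.ext (hKeq g x hgx 1)
    rw [h7]
    rfl
end

section
/- Let G be a compact Hausdorff topological group acting continuously on Hausdorff spaces X and Y, and give X × Y the diagonal G-action. Suppose X and Y are G-connected, X × Y is completely normal, X^G ≠ ∅ and Y^G ≠ ∅. Then cat_G(X × Y) ≤ cat_G(X) + cat_G(Y) − 1. -/
open Set unitInterval

section Bump
variable {G X : Type*} [Group G] [TopologicalSpace G] [CompactSpace G]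
  [TopologicalSpace X] [MulAction G X] [ContinuousSMul G X]

lemma notmem_smul_of_invariant {U : Set X} (hU : IsInvariantSet G U) (g : G) {x : X}
    (hx : x ∉ U) : g • x ∉ U := fun h => hx (by simpa using hU g⁻¹ _ h)

lemma exists_invariant_bumps [NormalSpace X] {m : ℕ} (U : Fin m → Set X)
    (ho : ∀ i, IsOpen (U i)) (hinv : ∀ i, IsInvariantSet G (U i))
    (hc : (⋃ i, U i) = univ) :
    ∃ u : Fin m → X → ℝ, (∀ i, Continuous (u i)) ∧ (∀ i (g : G) x, u i (g • x) = u i x) ∧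
      (∀ i x, 0 ≤ u i x) ∧ (∀ i x, x ∉ U i → u i x = 0) ∧ (∀ x, ∃ i, 0 < u i x) := by
  obtain ⟨v, hvc, -, hvcl⟩ := exists_subset_iUnion_closure_subset (u := U) (s := univ)
    isClosed_univ ho (fun x _ => Set.toFinite _) (by rw [hc])
  have hf : ∀ i, ∃ f : C(X, ℝ), EqOn f 0 (U i)ᶜ ∧ EqOn f 1 (closure (v i)) ∧
      ∀ x, f x ∈ Icc (0:ℝ) 1 := by
    intro i
    exact exists_continuous_zero_one_of_isClosed (ho i).isClosed_compl isClosed_closure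
      (Set.disjoint_left.2 fun a ha ha' => ha (hvcl i ha'))
  choose f hf0 hf1 hf01 using hf
  set u : Fin m → X → ℝ := fun i x => sSup (range fun g : G => f i (g • x)) with hu
  have hcont2 : ∀ i, Continuous fun p : G × X => f i (p.1 • p.2) :=
    fun i => (f i).continuous.comp continuous_smul
  have hcg : ∀ i (x : X), Continuous fun g : G => f i (g • x) :=
    fun i x => (f i).continuous.comp (continuous_id.smul continuous_const)
  have hbdd : ∀ i (x : X), BddAbove (range fun g : G => f i (g • x)) :=
    fun i x => (isCompact_range (hcg i x)).bddAbove
  have hne : ∀ i (x : X), (range fun g : G => f i (g • x)).Nonempty := fun i x => ⟨_, 1, rfl⟩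
  have hgr : ∀ i (x : X), ∃ a, IsGreatest (range fun g : G => f i (g • x)) a :=
    fun i x => (isCompact_range (hcg i x)).exists_isGreatest (hne i x)
  have hle : ∀ i (x : X) (g : G), f i (g • x) ≤ u i x := fun i x g => le_csSup (hbdd i x) ⟨g, rfl⟩
  refine ⟨u, ?_, ?_, ?_, ?_, ?_⟩
  · -- continuity
    intro i
    rw [OrderTopology.topology_eq_generate_intervals (α := ℝ), continuous_generateFrom_iff]
    rintro s ⟨a, rfl | rfl⟩
    · have : u i ⁻¹' Ioi a = Prod.snd '' {p : G × X | a < f i (p.1 • p.2)} := by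
        ext x
        simp only [mem_preimage, mem_Ioi, mem_image, mem_setOf_eq, Prod.exists]
        constructor
        · intro h
          obtain ⟨b, ⟨g, rfl⟩, hba⟩ := (lt_csSup_iff (hbdd i x) (hne i x)).1 h
          exact ⟨g, x, by simpa using hba, rfl⟩
        · rintro ⟨g, y, h, rfl⟩
          exact lt_of_lt_of_le h (hle i y g)
      rw [this]
      exact isOpenMap_snd _ (isOpen_lt continuous_const (hcont2 i))
    · have : u i ⁻¹' Iio a = (Prod.snd '' {p : G × X | a ≤ f i (p.1 • p.2)})ᶜ := by
        ext x
        simp only [mem_preimage, mem_Iio, mem_compl_iff, mem_image, mem_setOf_eq, Prod.exists,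
          not_exists]
        constructor
        · rintro h g y ⟨hay, rfl⟩
          exact absurd h (not_lt.2 (hay.trans (hle i y g)))
        · intro h
          obtain ⟨b, hb⟩ := hgr i x
          have hub : u i x = b := hb.csSup_eq
          rw [hub]
          obtain ⟨g, hg⟩ := hb.1
          by_contra hab
          exact h g x ⟨by simpa [hg] using not_lt.1 hab, rfl⟩
      rw [this]
      exact (isClosedMap_snd_of_compactSpace _ (isClosed_le continuous_const (hcont2 i))).isOpen_compl
  · -- invariance
    intro i g x
    have : (range fun h : G => f i (h • g • x)) = range fun h : G => f i (h • x) := by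
      ext y
      constructor
      · rintro ⟨h, rfl⟩; exact ⟨h * g, by simp [mul_smul]⟩
      · rintro ⟨h, rfl⟩; exact ⟨h * g⁻¹, by simp [mul_smul]⟩
    simp only [hu, this]
  · intro i x
    exact le_trans (hf01 i (1 • x)).1 (hle i x 1)
  · intro i x hx
    have : (range fun g : G => f i (g • x)) = {0} := by
      ext y
      simp only [mem_range, mem_singleton_iff]
      constructor
      · rintro ⟨g, rfl⟩
        exact hf0 i (notmem_smul_of_invariant (hinv i) g hx)
      · rintro rfl
        exact ⟨1, hf0 i (notmem_smul_of_invariant (hinv i) 1 hx)⟩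
    simp only [hu, this, csSup_singleton]
  · intro x
    obtain ⟨i, hi⟩ := mem_iUnion.1 (hvc (mem_univ x))
    have h1 : f i ((1:G) • x) = 1 := by rw [one_smul]; exact hf1 i (subset_closure hi)
    refine ⟨i, lt_of_lt_of_le one_pos ?_⟩
    rw [← h1]; exact hle i x 1

end Bump

section Orbit
variable {G X : Type*} [Group G] [TopologicalSpace G] [CompactSpace G]
  [TopologicalSpace X] [T2Space X] [MulAction G X] [ContinuousSMul G X]

lemma exists_orbit_retraction (hX : GConnected G X) {x₀ : X} (hx₀ : x₀ ∈ fixedPts G X) (z : X) :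
    ∃ ρ : {a : X // a ∈ smulOrbit G z} × I → X, Continuous ρ ∧
      (∀ a, ρ (a, 0) = (a : X)) ∧ (∀ a, ρ (a, 1) = x₀) ∧
      (∀ (g : G) (a : {a : X // a ∈ smulOrbit G z}) (hga : g • (a : X) ∈ smulOrbit G z) (t : I),
        g • ρ (a, t) = ρ (⟨g • (a : X), hga⟩, t)) := by
  set S : Subgroup G := MulAction.stabilizer G z with hS
  have hScl : IsClosed (S : Set G) := by
    have h1 : (S : Set G) = (fun g : G => g • z) ⁻¹' {z} := by
      ext g; simp [hS, MulAction.mem_stabilizer_iff]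
    rw [h1]
    exact isClosed_singleton.preimage (continuous_id.smul continuous_const)
  have hz : z ∈ fixedBySubgroup G (X := X) S := fun h hh => hh
  have hx0' : x₀ ∈ fixedBySubgroup G (X := X) S := fun h _ => hx₀ h
  obtain ⟨γ, hγ⟩ := hX S hScl z hz x₀ hx0'
  have wd : ∀ g g' : G, g • z = g' • z → ∀ t : I, g • γ t = g' • γ t := by
    intro g g' h t
    have hm : g'⁻¹ * g ∈ S := by
      rw [MulAction.mem_stabilizer_iff, mul_smul, h, inv_smul_smul]
    have hfix : (g'⁻¹ * g) • γ t = γ t := hγ t _ hm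
    calc g • γ t = g' • ((g'⁻¹ * g) • γ t) := by
          rw [← mul_smul, mul_inv_cancel_left]
      _ = g' • γ t := by rw [hfix]
  have sel : ∀ a : {a : X // a ∈ smulOrbit G z}, ∃ g : G, g • z = (a : X) := fun a => a.2
  choose sl hsl using sel
  set ρ : {a : X // a ∈ smulOrbit G z} × I → X := fun p => sl p.1 • γ p.2 with hρ
  have ρ_eq : ∀ (a : {a : X // a ∈ smulOrbit G z}) (g : G) (hg : g • z = (a : X)) (t : I),
      ρ (a, t) = g • γ t := fun a g hg t => wd _ g (by rw [hsl a, hg]) t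
  have hcont : Continuous ρ := by
    set q : G × I → {a : X // a ∈ smulOrbit G z} × I :=
      fun p => (⟨p.1 • z, ⟨p.1, rfl⟩⟩, p.2) with hq
    have hqc : Continuous q :=
      ((continuous_fst.smul continuous_const).subtype_mk _).prodMk continuous_snd
    have hqs : Function.Surjective q := by
      rintro ⟨⟨a, ha⟩, t⟩
      obtain ⟨g, hg⟩ := ha
      exact ⟨(g, t), by simp only [hq]; congr 1; exact Subtype.ext hg⟩
    have qm := (hqc.isClosedMap).isQuotientMap hqc hqs
    rw [qm.continuous_iff]
    have : ρ ∘ q = fun p : G × I => p.1 • γ p.2 :=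
      funext fun p => ρ_eq _ p.1 rfl p.2
    rw [this]
    exact continuous_fst.smul (γ.continuous.comp continuous_snd)
  refine ⟨ρ, hcont, ?_, ?_, ?_⟩
  · intro a
    have := ρ_eq a (sl a) (hsl a) 0
    rw [this, γ.source, hsl a]
  · intro a
    rw [ρ_eq a (sl a) (hsl a) 1, γ.target, hx₀ (sl a)]
  · intro g a hga t
    rw [ρ_eq a (sl a) (hsl a) t, ρ_eq ⟨g • (a : X), hga⟩ (g * sl a) (by rw [mul_smul, hsl a]) t,
      mul_smul]
end Orbit


-- reparametrizations
noncomputable def halfA (t : I) : I :=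
  ⟨min (2 * (t : ℝ)) 1, ⟨le_min (by nlinarith [t.2.1]) zero_le_one, min_le_right _ _⟩⟩
noncomputable def halfB (t : I) : I :=
  ⟨max (2 * (t : ℝ) - 1) 0, ⟨le_max_right _ _,
    max_le (by nlinarith [t.2.2]) zero_le_one⟩⟩

lemma halfA_continuous : Continuous halfA :=
  ((continuous_const.mul continuous_subtype_val).min continuous_const).subtype_mk _
lemma halfB_continuous : Continuous halfB :=
  (((continuous_const.mul continuous_subtype_val).sub continuous_const).max
    continuous_const).subtype_mk _
lemma halfA_zero : halfA 0 = 0 := by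
  ext; simp [halfA]
lemma halfA_half {t : I} (h : (t : ℝ) = 1/2) : halfA t = 1 := by
  ext; simp [halfA, h]
lemma halfB_half {t : I} (h : (t : ℝ) = 1/2) : halfB t = 0 := by
  ext; simp [halfB, h]
lemma halfB_one : halfB 1 = 1 := by
  ext; simp [halfB]; norm_num


section Piece
variable {G X Y : Type*} [Group G] [TopologicalSpace G] [CompactSpace G]
  [TopologicalSpace X] [T2Space X] [MulAction G X] [ContinuousSMul G X]
  [TopologicalSpace Y] [T2Space Y] [MulAction G Y] [ContinuousSMul G Y]

lemma exists_piece_homotopy (hX : GConnected G X) (hY : GConnected G Y)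
    {x₀ : X} (hx₀ : x₀ ∈ fixedPts G X) {y₀ : Y} (hy₀ : y₀ ∈ fixedPts G Y)
    {U : Set X} (hU : IsGCategorical G U) {V : Set Y} (hV : IsGCategorical G V)
    {O : Set (X × Y)} (hOsub : O ⊆ U ×ˢ V) :
    ∃ Φ : O × I → X × Y, Continuous Φ ∧ (∀ p : O, Φ (p, 0) = (p : X × Y)) ∧
      (∀ p : O, Φ (p, 1) = (x₀, y₀)) ∧
      (∀ (g : G) (p : O) (hgp : g • (p : X × Y) ∈ O) (t : I),
        g • Φ (p, t) = Φ (⟨g • (p : X × Y), hgp⟩, t)) := by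
  obtain ⟨hUo, hUinv, H, ⟨hHc, hHeq⟩, hH0, z, hH1⟩ := hU
  obtain ⟨hVo, hVinv, K, ⟨hKc, hKeq⟩, hK0, w, hK1⟩ := hV
  obtain ⟨ρ, hρc, hρ0, hρ1, hρeq⟩ := exists_orbit_retraction hX hx₀ z
  obtain ⟨σ', hσc, hσ0, hσ1, hσeq⟩ := exists_orbit_retraction hY hy₀ w
  set px : O → U := fun p => ⟨(p : X × Y).1, (hOsub p.2).1⟩ with hpx
  set py : O → V := fun p => ⟨(p : X × Y).2, (hOsub p.2).2⟩ with hpy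
  have hpxc : Continuous px := ((continuous_subtype_val).fst).subtype_mk _
  have hpyc : Continuous py := ((continuous_subtype_val).snd).subtype_mk _
  set A : O → {a : X // a ∈ smulOrbit G z} := fun p => ⟨H (px p, 1), hH1 _⟩ with hA
  set B : O → {b : Y // b ∈ smulOrbit G w} := fun p => ⟨K (py p, 1), hK1 _⟩ with hB
  have hAc : Continuous A :=
    (hHc.comp ((hpxc).prodMk continuous_const)).subtype_mk _
  have hBc : Continuous B :=
    (hKc.comp ((hpyc).prodMk continuous_const)).subtype_mk _
  set L : O × I → X × Y := fun q => (H (px q.1, q.2), K (py q.1, q.2)) with hL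
  have hLc : Continuous L :=
    (hHc.comp ((hpxc.comp continuous_fst).prodMk continuous_snd)).prodMk
      (hKc.comp ((hpyc.comp continuous_fst).prodMk continuous_snd))
  set Ψ : O × I → X × Y := fun q => (ρ (A q.1, halfB q.2), σ' (B q.1, halfB q.2)) with hΨ
  have hΨc : Continuous Ψ :=
    (hρc.comp (((hAc.comp continuous_fst)).prodMk (halfB_continuous.comp continuous_snd))).prodMk
      (hσc.comp (((hBc.comp continuous_fst)).prodMk (halfB_continuous.comp continuous_snd)))
  set Φ : O × I → X × Y :=
    fun q => if ((q.2 : ℝ)) ≤ 1/2 then L (q.1, halfA q.2) else Ψ q with hΦ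
  have bound : ∀ q : O × I, ((q.2 : ℝ)) = 1/2 → L (q.1, halfA q.2) = Ψ q := by
    intro q hq
    rw [halfA_half hq]
    have h2 : halfB q.2 = 0 := halfB_half hq
    simp only [hΨ, h2, hρ0, hσ0, hL, hA, hB]
  have hΦc : Continuous Φ := by
    apply Continuous.if_le (hLc.comp (continuous_fst.prodMk (halfA_continuous.comp
      continuous_snd))) hΨc (continuous_subtype_val.comp continuous_snd) continuous_const bound
  refine ⟨Φ, hΦc, ?_, ?_, ?_⟩
  · intro p
    have h0 : ((0 : I) : ℝ) ≤ 1/2 := by norm_num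
    simp only [hΦ, if_pos h0, halfA_zero, hL]
    exact Prod.ext (hH0 _) (hK0 _)
  · intro p
    have h1 : ¬ ((1 : I) : ℝ) ≤ 1/2 := by norm_num
    simp only [hΦ, if_neg h1, hΨ, halfB_one, hρ1, hσ1]
  · intro g p hgp t
    have hsmul : ∀ (a : X) (b : Y), g • ((a, b) : X × Y) = (g • a, g • b) := fun _ _ => rfl
    have hpx' : px ⟨g • (p : X × Y), hgp⟩ = ⟨g • ((px p : X)), hUinv g _ (px p).2⟩ := rfl
    have hpy' : py ⟨g • (p : X × Y), hgp⟩ = ⟨g • ((py p : Y)), hVinv g _ (py p).2⟩ := rfl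
    simp only [hΦ]
    split_ifs with h
    · refine Prod.ext ?_ ?_
      · show g • H (px p, halfA t) = H (px ⟨g • (p : X × Y), hgp⟩, halfA t)
        rw [hHeq g (px p) (hUinv g _ (px p).2) (halfA t)]
        rfl
      · show g • K (py p, halfA t) = K (py ⟨g • (p : X × Y), hgp⟩, halfA t)
        rw [hKeq g (py p) (hVinv g _ (py p).2) (halfA t)]
        rfl
    · have hAg : A ⟨g • (p : X × Y), hgp⟩ =
          ⟨g • ((A p : X)), by rw [hHeq g (px p) (hUinv g _ (px p).2) 1, ← hpx']; exact hH1 _⟩ := by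
        apply Subtype.ext
        simp only [hA, hpx']
        exact (hHeq g (px p) (hUinv g _ (px p).2) 1).symm
      have hBg : B ⟨g • (p : X × Y), hgp⟩ =
          ⟨g • ((B p : Y)), by rw [hKeq g (py p) (hVinv g _ (py p).2) 1, ← hpy']; exact hK1 _⟩ := by
        apply Subtype.ext
        simp only [hB, hpy']
        exact (hKeq g (py p) (hVinv g _ (py p).2) 1).symm
      refine Prod.ext ?_ ?_
      · show g • ρ (A p, halfB t) = ρ (A ⟨g • (p : X × Y), hgp⟩, halfB t)
        rw [hAg]
        exact hρeq g (A p) _ (halfB t)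
      · show g • σ' (B p, halfB t) = σ' (B ⟨g • (p : X × Y), hgp⟩, halfB t)
        rw [hBg]
        exact hσeq g (B p) _ (halfB t)
end Piece


section Glue
variable {G Z : Type*} [Group G] [TopologicalSpace Z] [MulAction G Z]

lemma isGCategorical_iUnion_of_pieces {ι : Type*} (O : ι → Set Z)
    (ho : ∀ p, IsOpen (O p)) (hinv : ∀ p, IsInvariantSet G (O p))
    (hdisj : ∀ p q, p ≠ q → Disjoint (O p) (O q)) (z₀ : Z)
    (hpieces : ∀ p, ∃ Φ : (O p) × I → Z, Continuous Φ ∧ (∀ x : O p, Φ (x, 0) = (x : Z)) ∧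
      (∀ x : O p, Φ (x, 1) = z₀) ∧
      (∀ (g : G) (x : O p) (hgx : g • (x : Z) ∈ O p) (t : I),
        g • Φ (x, t) = Φ (⟨g • (x : Z), hgx⟩, t))) :
    IsGCategorical G (⋃ p, O p) := by
  choose Φ hcont h0 h1 heq using hpieces
  set W : Set Z := ⋃ p, O p with hW
  have hmem : ∀ x : W, ∃ p, (x : Z) ∈ O p := fun x => mem_iUnion.1 x.2
  choose c hc using hmem
  have uniq : ∀ (x : W) (p : ι), (x : Z) ∈ O p → c x = p := by
    intro x p hp
    by_contra hne
    exact Set.disjoint_left.1 (hdisj _ _ hne) (hc x) hp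
  set Ψ : W × I → Z := fun q => Φ (c q.1) (⟨(q.1 : Z), hc q.1⟩, q.2) with hΨdef
  have key : ∀ (x : W) (p : ι) (hxp : (x : Z) ∈ O p) (t : I),
      Ψ (x, t) = Φ p (⟨(x : Z), hxp⟩, t) := by
    intro x p hxp t
    cases uniq x p hxp
    rfl
  refine ⟨isOpen_iUnion ho, fun g x hx => ?_, Ψ, ⟨?_, ?_⟩, ?_, z₀, ?_⟩
  · obtain ⟨p, hp⟩ := mem_iUnion.1 hx
    exact mem_iUnion.2 ⟨p, hinv p g x hp⟩
  · -- continuity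
    rw [continuous_iff_continuousAt]
    rintro ⟨x, t⟩
    have hN : IsOpen {q : W × I | (q.1 : Z) ∈ O (c x)} :=
      (ho (c x)).preimage (continuous_subtype_val.comp continuous_fst)
    refine ContinuousOn.continuousAt ?_ (hN.mem_nhds (hc x))
    rw [continuousOn_iff_continuous_restrict]
    have hres : Set.domRestrict {q : W × I | (q.1 : Z) ∈ O (c x)} Ψ =
        fun q => Φ (c x) (⟨(q.1.1 : Z), q.2⟩, q.1.2) :=
      funext fun q => key q.1.1 (c x) q.2 q.1.2
    rw [hres]
    refine (hcont (c x)).comp (Continuous.prodMk ?_ ?_)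
    · exact (continuous_subtype_val.comp (continuous_fst.comp continuous_subtype_val)).subtype_mk _
    · exact continuous_snd.comp continuous_subtype_val
  · -- equivariance
    intro g x hgx t
    have hgO : g • (x : Z) ∈ O (c x) := hinv (c x) g _ (hc x)
    rw [key x (c x) (hc x) t, key ⟨g • (x : Z), hgx⟩ (c x) hgO t]
    exact heq (c x) g ⟨(x : Z), hc x⟩ hgO t
  · intro x
    exact key x (c x) (hc x) 0 ▸ h0 (c x) ⟨(x : Z), hc x⟩
  · intro x
    rw [key x (c x) (hc x) 1, h1 (c x) ⟨(x : Z), hc x⟩]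
    exact ⟨1, one_smul _ _⟩
end Glue


section Key
variable {G X Y : Type*} [Group G] [TopologicalSpace G] [CompactSpace G]
  [TopologicalSpace X] [T2Space X] [MulAction G X] [ContinuousSMul G X]
  [TopologicalSpace Y] [T2Space Y] [MulAction G Y] [ContinuousSMul G Y]

lemma exists_cover_prod [NormalSpace X] [NormalSpace Y]
    (hX : GConnected G X) (hY : GConnected G Y)
    {x₀ : X} (hx₀ : x₀ ∈ fixedPts G X) {y₀ : Y} (hy₀ : y₀ ∈ fixedPts G Y)
    {m n : ℕ} (hm : 1 ≤ m) (hn : 1 ≤ n)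
    (U : Fin m → Set X) (hU : ∀ i, IsGCategorical G (U i)) (hUc : (⋃ i, U i) = univ)
    (V : Fin n → Set Y) (hV : ∀ j, IsGCategorical G (V j)) (hVc : (⋃ j, V j) = univ) :
    ∃ W : Fin (m + n - 1) → Set (X × Y),
      (∀ k, IsGCategorical G (W k)) ∧ (⋃ k, W k) = univ := by
  obtain ⟨u, huc, huinv, hunn, huz, hupos⟩ :=
    exists_invariant_bumps U (fun i => (hU i).1) (fun i => (hU i).2.1) hUc
  obtain ⟨v, hvc, hvinv, hvnn, hvz, hvpos⟩ :=
    exists_invariant_bumps V (fun j => (hV j).1) (fun j => (hV j).2.1) hVc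
  -- the pieces
  set O : Fin m × Fin n → Set (X × Y) := fun ij =>
    {p : X × Y | 0 < u ij.1 p.1 * v ij.2 p.2} ∩
      ⋂ (r : Fin m) (s : Fin n),
        {p : X × Y | (r : ℕ) + (s : ℕ) = (ij.1 : ℕ) + (ij.2 : ℕ) ∧ (r, s) ≠ ij →
          u r p.1 * v s p.2 < u ij.1 p.1 * v ij.2 p.2} with hO
  have hOopen : ∀ ij, IsOpen (O ij) := by
    intro ij
    refine IsOpen.inter (isOpen_lt continuous_const
      ((huc _ |>.comp continuous_fst).mul (hvc _ |>.comp continuous_snd))) ?_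
    refine isOpen_iInter_of_finite fun r => isOpen_iInter_of_finite fun s => ?_
    by_cases h : (r : ℕ) + (s : ℕ) = (ij.1 : ℕ) + (ij.2 : ℕ) ∧ (r, s) ≠ ij
    · have : {p : X × Y | (r : ℕ) + (s : ℕ) = (ij.1 : ℕ) + (ij.2 : ℕ) ∧ (r, s) ≠ ij →
          u r p.1 * v s p.2 < u ij.1 p.1 * v ij.2 p.2} =
          {p : X × Y | u r p.1 * v s p.2 < u ij.1 p.1 * v ij.2 p.2} := by
        ext p; simp [h]
      rw [this]
      exact isOpen_lt ((huc _ |>.comp continuous_fst).mul (hvc _ |>.comp continuous_snd))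
        ((huc _ |>.comp continuous_fst).mul (hvc _ |>.comp continuous_snd))
    · have : {p : X × Y | (r : ℕ) + (s : ℕ) = (ij.1 : ℕ) + (ij.2 : ℕ) ∧ (r, s) ≠ ij →
          u r p.1 * v s p.2 < u ij.1 p.1 * v ij.2 p.2} = univ := by
        ext p; simp only [mem_setOf_eq, mem_univ, iff_true]; exact fun hc => absurd hc h
      rw [this]; exact isOpen_univ
  have hOinv : ∀ ij, IsInvariantSet G (O ij) := by
    rintro ij g p ⟨h1, h2⟩
    have hsm : ∀ (q : X × Y), (g • q).1 = g • q.1 ∧ (g • q).2 = g • q.2 := fun _ => ⟨rfl, rfl⟩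
    constructor
    · show 0 < u ij.1 (g • p.1) * v ij.2 (g • p.2)
      rwa [huinv, hvinv]
    · simp only [mem_iInter, mem_setOf_eq] at h2 ⊢
      intro r s hc
      show u r (g • p.1) * v s (g • p.2) < u ij.1 (g • p.1) * v ij.2 (g • p.2)
      rw [huinv, hvinv, huinv, hvinv]
      exact h2 r s hc
  have hOsub : ∀ ij, O ij ⊆ U ij.1 ×ˢ V ij.2 := by
    rintro ij p ⟨h1, -⟩
    have h1' : 0 < u ij.1 p.1 * v ij.2 p.2 := h1
    constructor
    · by_contra hx
      rw [huz _ _ hx, zero_mul] at h1'; exact lt_irrefl _ h1'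
    · by_contra hy
      rw [hvz _ _ hy, mul_zero] at h1'; exact lt_irrefl _ h1'
  have hOdisj : ∀ ij rs : Fin m × Fin n,
      (ij.1 : ℕ) + (ij.2 : ℕ) = (rs.1 : ℕ) + (rs.2 : ℕ) → ij ≠ rs →
      Disjoint (O ij) (O rs) := by
    intro ij rs hsum hne
    rw [Set.disjoint_left]
    rintro p ⟨-, h2⟩ ⟨-, h2'⟩
    simp only [mem_iInter, mem_setOf_eq] at h2 h2'
    exact lt_asymm (h2 rs.1 rs.2 ⟨hsum.symm, by simpa using hne.symm⟩)
      (h2' ij.1 ij.2 ⟨hsum, by simpa [Prod.ext_iff] using hne⟩)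
  have hOcover : ∀ p : X × Y, ∃ ij : Fin m × Fin n, p ∈ O ij := by
    intro p
    haveI : Nonempty (Fin m) := ⟨⟨0, hm⟩⟩
    haveI : Nonempty (Fin n) := ⟨⟨0, hn⟩⟩
    obtain ⟨i, -, hi⟩ := Finset.exists_max_image (Finset.univ : Finset (Fin m))
      (fun i => toLex ((u i p.1), (i : ℕ))) Finset.univ_nonempty
    obtain ⟨j, -, hj⟩ := Finset.exists_max_image (Finset.univ : Finset (Fin n))
      (fun j => toLex ((v j p.2), (j : ℕ))) Finset.univ_nonempty
    have hmaxu : ∀ r : Fin m, u r p.1 ≤ u i p.1 := by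
      intro r
      rcases Prod.Lex.le_iff.1 (hi r (Finset.mem_univ r)) with h | ⟨h, -⟩
      exacts [le_of_lt h, le_of_eq h]
    have htieu : ∀ r : Fin m, u i p.1 ≤ u r p.1 → (r : ℕ) ≤ (i : ℕ) := by
      intro r hr
      rcases Prod.Lex.le_iff.1 (hi r (Finset.mem_univ r)) with h | ⟨-, h⟩
      exacts [absurd hr (not_le.2 h), h]
    have hmaxv : ∀ s : Fin n, v s p.2 ≤ v j p.2 := by
      intro s
      rcases Prod.Lex.le_iff.1 (hj s (Finset.mem_univ s)) with h | ⟨h, -⟩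
      exacts [le_of_lt h, le_of_eq h]
    have htiev : ∀ s : Fin n, v j p.2 ≤ v s p.2 → (s : ℕ) ≤ (j : ℕ) := by
      intro s hs
      rcases Prod.Lex.le_iff.1 (hj s (Finset.mem_univ s)) with h | ⟨-, h⟩
      exacts [absurd hs (not_le.2 h), h]
    have hui : 0 < u i p.1 := by
      obtain ⟨i₀, hi₀⟩ := hupos p.1
      exact lt_of_lt_of_le hi₀ (hmaxu i₀)
    have hvj : 0 < v j p.2 := by
      obtain ⟨j₀, hj₀⟩ := hvpos p.2
      exact lt_of_lt_of_le hj₀ (hmaxv j₀)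
    refine ⟨(i, j), ⟨mul_pos hui hvj, ?_⟩⟩
    simp only [mem_iInter, mem_setOf_eq]
    rintro r s ⟨hsum, hne⟩
    rcases lt_trichotomy ((r : ℕ)) ((i : ℕ)) with hlt | heq | hgt
    · have hsj : (j : ℕ) < (s : ℕ) := by omega
      have hvs : v s p.2 < v j p.2 :=
        not_le.1 fun hle => absurd (htiev s hle) (by omega)
      calc u r p.1 * v s p.2 ≤ u i p.1 * v s p.2 :=
            mul_le_mul_of_nonneg_right (hmaxu r) (hvnn s p.2)
        _ < u i p.1 * v j p.2 := by
            exact mul_lt_mul_of_pos_left hvs hui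
    · exfalso
      apply hne
      have hr : r = i := Fin.ext heq
      have hs : s = j := Fin.ext (by omega)
      rw [hr, hs]
    · have hus : u r p.1 < u i p.1 :=
        not_le.1 fun hle => absurd (htieu r hle) (by omega)
      calc u r p.1 * v s p.2 ≤ u r p.1 * v j p.2 :=
            mul_le_mul_of_nonneg_left (hmaxv s) (hunn r p.1)
        _ < u i p.1 * v j p.2 := mul_lt_mul_of_pos_right hus hvj
  -- assemble levels
  set W : Fin (m + n - 1) → Set (X × Y) := fun k =>
    ⋃ (ij : Fin m × Fin n) (_ : (ij.1 : ℕ) + (ij.2 : ℕ) = (k : ℕ)), O ij with hWdef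
  refine ⟨W, ?_, ?_⟩
  · intro k
    have hrw : W k = ⋃ q : {ij : Fin m × Fin n // (ij.1 : ℕ) + (ij.2 : ℕ) = (k : ℕ)},
        O q.1 := by
      rw [hWdef]; exact (Set.iUnion_subtype (fun ij : Fin m × Fin n => (ij.1 : ℕ) + (ij.2 : ℕ) = (k : ℕ)) (fun q => O q.1)).symm
    rw [hrw]
    refine isGCategorical_iUnion_of_pieces _ (fun q => hOopen q.1) (fun q => hOinv q.1)
      ?_ (x₀, y₀) ?_
    · rintro q q' hne
      exact hOdisj q.1 q'.1 (q.2.trans q'.2.symm) (fun h => hne (Subtype.ext h))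
    · intro q
      exact exists_piece_homotopy hX hY hx₀ hy₀ (hU q.1.1) (hV q.1.2) (hOsub q.1)
  · rw [eq_univ_iff_forall]
    intro p
    obtain ⟨⟨i, j⟩, hij⟩ := hOcover p
    have hk : (i : ℕ) + (j : ℕ) < m + n - 1 := by omega
    refine mem_iUnion.2 ⟨⟨(i : ℕ) + (j : ℕ), hk⟩, ?_⟩
    exact mem_iUnion.2 ⟨(i, j), mem_iUnion.2 ⟨rfl, hij⟩⟩
end Key


lemma eqvCat_attained (G X : Type*) [SMul G X] [TopologicalSpace X] (h : eqvCat G X ≠ ⊤) :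
    ∃ n : ℕ, eqvCat G X = (n : ℕ∞) ∧ ∃ U : Fin n → Set X,
      (∀ i, IsGCategorical G (U i)) ∧ (⋃ i, U i) = Set.univ := by
  have h1 : eqvCat G X < eqvCat G X + 1 := (ENat.lt_add_one_iff h).2 le_rfl
  unfold eqvCat at h1
  conv at h1 => rw [show sInf {c : ℕ∞ | ∃ n : ℕ, c = n ∧ ∃ U : Fin n → Set X,
    (∀ i, IsGCategorical G (U i)) ∧ (⋃ i, U i) = Set.univ} + 1 = eqvCat G X + 1 from rfl]
  obtain ⟨a, haS, halt⟩ := sInf_lt_iff.1 h1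
  obtain ⟨n, rfl, hU⟩ := haS
  refine ⟨n, le_antisymm (sInf_le ⟨n, rfl, hU⟩) ((ENat.lt_add_one_iff h).1 halt), hU⟩


/-- Let `G` be a compact Hausdorff topological group acting continuously on
Hausdorff spaces `X` and `Y`, and give `X × Y` the diagonal `G`-action. Suppose `X` and `Y`
are `G`-connected, `X × Y` is completely normal, `X^G ≠ ∅` and `Y^G ≠ ∅`. Then
`cat_G(X × Y) ≤ cat_G(X) + cat_G(Y) − 1`. -/
theorem eqvCat_prod_le
    {G X Y : Type*} [Group G] [TopologicalSpace G] [IsTopologicalGroup G] [CompactSpace G]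
    [T2Space G] [TopologicalSpace X] [T2Space X] [MulAction G X] [ContinuousSMul G X]
    [TopologicalSpace Y] [T2Space Y] [MulAction G Y] [ContinuousSMul G Y]
    [CompletelyNormalSpace (X × Y)]
    (hX : GConnected G X) (hY : GConnected G Y)
    (hfX : (fixedPts G X).Nonempty) (hfY : (fixedPts G Y).Nonempty) :
    eqvCat G (X × Y) ≤ eqvCat G X + eqvCat G Y - 1 := by
  obtain ⟨x₀, hx₀⟩ := hfX
  obtain ⟨y₀, hy₀⟩ := hfY
  by_cases hxT : eqvCat G X = ⊤
  · rw [hxT]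
    simp [ENat.top_sub_coe]
  by_cases hyT : eqvCat G Y = ⊤
  · rw [hyT]
    simp [ENat.top_sub_coe]
  -- normality of the factors
  have hembX : Topology.IsClosedEmbedding (fun x : X => (x, y₀)) := by
    refine ⟨(Homeomorph.prodComm Y X).isEmbedding.comp (isEmbedding_prodMkRight y₀), ?_⟩
    have hr : Set.range (fun x : X => (x, y₀)) = (univ : Set X) ×ˢ ({y₀} : Set Y) := by
      ext ⟨a, b⟩; simp [eq_comm]
    rw [hr]; exact isClosed_univ.prod isClosed_singleton
  have hembY : Topology.IsClosedEmbedding (fun y : Y => (x₀, y)) := by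
    refine ⟨isEmbedding_prodMkRight x₀, ?_⟩
    have hr : Set.range (fun y : Y => (x₀, y)) = ({x₀} : Set X) ×ˢ (univ : Set Y) := by
      ext ⟨a, b⟩; simp [eq_comm]
    rw [hr]; exact isClosed_singleton.prod isClosed_univ
  haveI hNX : NormalSpace X := hembX.normalSpace
  haveI hNY : NormalSpace Y := hembY.normalSpace
  obtain ⟨m, hmeq, U, hU, hUc⟩ := eqvCat_attained G X hxT
  obtain ⟨n, hneq, V, hV, hVc⟩ := eqvCat_attained G Y hyT
  have hm1 : 1 ≤ m := by
    rcases Nat.eq_zero_or_pos m |>.symm with h | rfl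
    · exact h
    · exfalso
      rw [Set.iUnion_of_empty] at hUc
      have : x₀ ∈ (∅ : Set X) := by rw [hUc]; trivial
      exact this
  have hn1 : 1 ≤ n := by
    rcases Nat.eq_zero_or_pos n |>.symm with h | rfl
    · exact h
    · exfalso
      rw [Set.iUnion_of_empty] at hVc
      have : y₀ ∈ (∅ : Set Y) := by rw [hVc]; trivial
      exact this
  obtain ⟨W, hW, hWc⟩ := exists_cover_prod hX hY hx₀ hy₀ hm1 hn1 U hU hUc V hV hVc
  have hle : eqvCat G (X × Y) ≤ ((m + n - 1 : ℕ) : ℕ∞) := by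
    unfold eqvCat
    exact sInf_le ⟨m + n - 1, rfl, W, hW, hWc⟩
  rw [hmeq, hneq]
  refine hle.trans ?_
  rw [← Nat.cast_add]
  have hcast : ((m + n - 1 : ℕ) : ℕ∞) = ((m + n : ℕ) : ℕ∞) - ((1 : ℕ) : ℕ∞) := by
    rw [← ENat.coe_sub]
  rw [hcast]
  simp
end
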